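/- For any nonnegative integer $m$, $\sum_{a=0}^{m} \frac{(a+1)\,(2m+2)!}{(m-a)!\,(m+2+a)!} = \frac{(2m+1)!}{(m!)^2}$. -/

import Mathlib

/-- For any nonnegative integer `m`,
`∑_{a=0}^{m} (a+1)(2m+2)! / ((m-a)! (m+2+a)!) = (2m+1)! / (m!)^2`. -/
theorem stmt2 (m : ℕ) :
    ∑ a ∈ Finset.range (m + 1),
      (((a + 1 : ℕ) : ℚ) * (Nat.factorial (2 * m + 2) : ℚ) /
        ((Nat.factorial (m - a) : ℚ) * (Nat.factorial (m + 2 + a) : ℚ)))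
      = (Nat.factorial (2 * m + 1) : ℚ) / ((Nat.factorial m : ℚ)) ^ 2 := by
  have fac_ne : ∀ k : ℕ, ((Nat.factorial k : ℚ)) ≠ 0 := fun k => by
    exact_mod_cast (Nat.factorial_ne_zero k)
  have key : ∀ n, n ≤ m → ∑ a ∈ Finset.range n,
      (((a + 1 : ℕ) : ℚ) * (Nat.factorial (2 * m + 2) : ℚ) /
        ((Nat.factorial (m - a) : ℚ) * (Nat.factorial (m + 2 + a) : ℚ)))
      = (Nat.factorial (2 * m + 2) : ℚ) /
          (2 * (Nat.factorial m : ℚ) * (Nat.factorial (m + 1) : ℚ))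
        - (Nat.factorial (2 * m + 2) : ℚ) /
          (2 * (Nat.factorial (m - n) : ℚ) * (Nat.factorial (m + 1 + n) : ℚ)) := by
    intro n hn
    induction n with
    | zero => simp
    | succ k ih =>
      have hk : k ≤ m := Nat.le_of_succ_le hn
      rw [Finset.sum_range_succ, ih hk]
      have h1 : Nat.factorial (m - k) = (m - k) * Nat.factorial (m - (k + 1)) := by
        have : m - k = (m - (k + 1)) + 1 := by omega
        rw [this, Nat.factorial_succ]
      have h2 : Nat.factorial (m + 1 + (k + 1)) = (m + 2 + k) * Nat.factorial (m + 2 + k - 1) := by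
        have : m + 1 + (k + 1) = (m + 2 + k - 1) + 1 := by omega
        rw [this, Nat.factorial_succ]
        congr 1
        omega
      have h3 : Nat.factorial (m + 2 + k) = (m + 2 + k) * Nat.factorial (m + 1 + k) := by
        have : m + 2 + k = (m + 1 + k) + 1 := by omega
        rw [this, Nat.factorial_succ]
      have h4 : m + 2 + k - 1 = m + 1 + k := by omega
      rw [h1, h2, h3, h4]
      push_cast
      have hmk : ((m - k : ℕ) : ℚ) = (m : ℚ) - k := by
        push_cast [Nat.cast_sub hk]; ring
      have hmk1 : ((m - k : ℕ) : ℚ) ≠ 0 := by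
        rw [hmk]
        have : (k : ℚ) < m := by exact_mod_cast hn
        linarith
      rw [hmk] at hmk1 ⊢
      field_simp
      ring
  have hlast := key m le_rfl
  rw [Finset.sum_range_succ, hlast]
  have e1 : m - m = 0 := by omega
  have e2 : m + 1 + m = 2 * m + 1 := by ring
  have e3 : m + 2 + m = 2 * m + 2 := by ring
  have e4 : Nat.factorial (2 * m + 2) = (2 * m + 2) * Nat.factorial (2 * m + 1) := by
    rw [show 2 * m + 2 = (2 * m + 1) + 1 from rfl, Nat.factorial_succ]
  have e5 : Nat.factorial (m + 1) = (m + 1) * Nat.factorial m := Nat.factorial_succ m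
  rw [e1, e2, e3, e4, e5]
  simp only [Nat.factorial_zero]
  push_cast
  field_simp
  ring
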